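/- Let V be a 2-dimensional totally isotropic subspace of M₂(ℝ) with respect to the determinant form. Then either all nonzero matrices in V have the same 1-dimensional image (there is a line L ⊆ ℝ² with range(A) ⊆ L for all A ∈ V), or all nonzero matrices in V have the same 1-dimensional kernel (there is a line L ⊆ ℝ² with L ⊆ ker(A) for all A ∈ V). -/

import Mathlib

/-- 2D cross product. -/
private def cross2 (w z : Fin 2 → ℝ) : ℝ := w 0 * z 1 - w 1 * z 0

private lemma cross2_mulVec (M : Matrix (Fin 2) (Fin 2) ℝ) (x y : Fin 2 → ℝ) :
    cross2 (M.mulVec x) (M.mulVec y) = M.det * cross2 x y := by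
  simp [cross2, Matrix.mulVec, dotProduct, Fin.sum_univ_two, Matrix.det_fin_two]
  ring

private lemma mem_span_of_cross2 {w z : Fin 2 → ℝ} (hw : w ≠ 0) (h : cross2 w z = 0) :
    z ∈ Submodule.span ℝ {w} := by
  rw [Submodule.mem_span_singleton]
  by_cases h0 : w 0 ≠ 0
  · refine ⟨z 0 / w 0, ?_⟩
    funext i
    fin_cases i
    · simp [div_mul_cancel₀, h0]
    · simp only [Pi.smul_apply, smul_eq_mul]
      field_simp
      unfold cross2 at h; simp only [Fin.mk_one, Fin.zero_eta] at *; linarith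
  · push_neg at h0
    have h1 : w 1 ≠ 0 := by
      intro h1
      exact hw (funext fun i => by fin_cases i <;> simp [h0, h1])
    refine ⟨z 1 / w 1, ?_⟩
    funext i
    fin_cases i
    · simp only [Pi.smul_apply, smul_eq_mul]
      unfold cross2 at h
      field_simp
      simp only [Fin.mk_one, Fin.zero_eta] at *
      nlinarith [h]
    · simp [div_mul_cancel₀, h1]

/-- A 2-dimensional totally isotropic subspace of `(M₂(ℝ), det)` consists either of
matrices with image in a fixed line, or of matrices whose kernel contains a fixed line. -/
theorem stmt_10 (V : Submodule ℝ (Matrix (Fin 2) (Fin 2) ℝ))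
    (hdim : Module.finrank ℝ V = 2)
    (hiso : ∀ A ∈ V, ∀ A' ∈ V, ((A + A').det - A.det - A'.det) / 2 = 0)
    (hdet : ∀ A ∈ V, A.det = 0) :
    (∃ L : Submodule ℝ (Fin 2 → ℝ), Module.finrank ℝ L = 1 ∧
        ∀ A ∈ V, LinearMap.range A.mulVecLin ≤ L) ∨
    (∃ L : Submodule ℝ (Fin 2 → ℝ), Module.finrank ℝ L = 1 ∧
        ∀ A ∈ V, L ≤ LinearMap.ker A.mulVecLin) := by
  classical
  -- basis of V
  have b := Module.finBasisOfFinrankEq ℝ V hdim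
  set A : Matrix (Fin 2) (Fin 2) ℝ := ((b 0 : V) : Matrix (Fin 2) (Fin 2) ℝ) with hAdef
  set B : Matrix (Fin 2) (Fin 2) ℝ := ((b 1 : V) : Matrix (Fin 2) (Fin 2) ℝ) with hBdef
  have hA : A ∈ V := (b 0).2
  have hB : B ∈ V := (b 1).2
  have hdA : A.det = 0 := hdet A hA
  have hdB : B.det = 0 := hdet B hB
  have hdAB : (A + B).det = 0 := by
    have := hiso A hA B hB
    rw [hdA, hdB] at this
    linarith [this]
  -- every element of V is a combination of A and B
  have hspan : ∀ C ∈ V, ∃ s t : ℝ, C = s • A + t • B := by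
    intro C hC
    refine ⟨b.repr ⟨C, hC⟩ 0, b.repr ⟨C, hC⟩ 1, ?_⟩
    have h := b.sum_repr ⟨C, hC⟩
    have h2 := congrArg (Subtype.val) h
    simp only [Fin.sum_univ_two, Submodule.coe_add, Submodule.coe_smul] at h2
    exact h2.symm
  by_cases hcommon : ∃ u : Fin 2 → ℝ, u ≠ 0 ∧ A.mulVec u = 0 ∧ B.mulVec u = 0
  · -- common kernel line
    obtain ⟨u, hu0, hAu, hBu⟩ := hcommon
    right
    refine ⟨Submodule.span ℝ {u}, finrank_span_singleton hu0, ?_⟩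
    intro C hC
    rw [Submodule.span_le]
    rintro x rfl
    obtain ⟨s, t, rfl⟩ := hspan C hC
    simp only [SetLike.mem_coe, LinearMap.mem_ker, Matrix.mulVecLin_apply,
      Matrix.add_mulVec, Matrix.smul_mulVec, hAu, hBu, smul_zero, add_zero]
  · -- common range line
    push_neg at hcommon
    obtain ⟨u, hu0, hAu⟩ := Matrix.exists_mulVec_eq_zero_iff.mpr hdA
    obtain ⟨v, hv0, hBv⟩ := Matrix.exists_mulVec_eq_zero_iff.mpr hdB
    have hBu : B.mulVec u ≠ 0 := hcommon u hu0 hAu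
    have hAv : A.mulVec v ≠ 0 := fun h => hcommon v hv0 h hBv
    left
    refine ⟨Submodule.span ℝ {A.mulVec v}, finrank_span_singleton hAv, ?_⟩
    -- B.mulVec u is parallel to A.mulVec v
    have hkey : cross2 (A.mulVec v) (B.mulVec u) = 0 := by
      have h1 : (A + B).mulVec v = A.mulVec v := by
        rw [Matrix.add_mulVec, hBv, add_zero]
      have h2 : (A + B).mulVec u = B.mulVec u := by
        rw [Matrix.add_mulVec, hAu, zero_add]
      calc cross2 (A.mulVec v) (B.mulVec u)
          = cross2 ((A + B).mulVec v) ((A + B).mulVec u) := by rw [h1, h2]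
        _ = (A + B).det * cross2 v u := cross2_mulVec _ _ _
        _ = 0 := by rw [hdAB, zero_mul]
    have hBuL : B.mulVec u ∈ Submodule.span ℝ {A.mulVec v} :=
      mem_span_of_cross2 hAv hkey
    have hAx : ∀ x, A.mulVec x ∈ Submodule.span ℝ {A.mulVec v} := by
      intro x
      apply mem_span_of_cross2 hAv
      rw [cross2_mulVec, hdA, zero_mul]
    have hBx : ∀ x, B.mulVec x ∈ Submodule.span ℝ {A.mulVec v} := by
      intro x
      have h1 : B.mulVec x ∈ Submodule.span ℝ {B.mulVec u} := by
        apply mem_span_of_cross2 hBu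
        rw [cross2_mulVec, hdB, zero_mul]
      have h2 : Submodule.span ℝ {B.mulVec u} ≤ Submodule.span ℝ {A.mulVec v} := by
        rw [Submodule.span_le, Set.singleton_subset_iff]
        exact hBuL
      exact h2 h1
    intro C hC
    rintro y ⟨x, rfl⟩
    obtain ⟨s, t, rfl⟩ := hspan C hC
    simp only [Matrix.mulVecLin_apply, Matrix.add_mulVec, Matrix.smul_mulVec]
    exact Submodule.add_mem _ (Submodule.smul_mem _ s (hAx x)) (Submodule.smul_mem _ t (hBx x))
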